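/- Let (ω,Σ) be a weight system on a finite player set N and let G=(N,E) be a graph preserving (ω,Σ)-convexity. Then for every priority level k, every connected component of the subgraph G_k of G induced by the set of players of priority k is a complete graph or a star. -/

import Mathlib

open Finset

variable {α : Type*}

noncomputable section

open scoped Classical

/-- `ω̄^S_i`: the weight of `i` if `i` belongs to the top-priority part `S̄` of `S`, else `0`.
Here the ordered partition `Σ` is encoded by the priority function `p`. -/
def wbar [DecidableEq α] (ω : α → ℝ) (p : α → ℕ) (S : Finset α) (i : α) : ℝ :=
  if i ∈ S ∧ p i = S.sup p then ω i else 0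

/-- `(ω,Σ)`-convexity of a TU-game `v`. -/
def WConvex [DecidableEq α] (ω : α → ℝ) (p : α → ℕ) (v : Finset α → ℝ) : Prop :=
  ∀ S T : Finset α, S ⊂ T →
    0 ≤ ∑ i ∈ S, wbar ω p T i * (v T - v (T.erase i) - v S + v (S.erase i))

/-- The connected component of `i` in the subgraph of `G` induced by `S`. -/
def compOf [Fintype α] (G : SimpleGraph α) (S : Finset α) (i : α) : Finset α :=
  S.filter fun j => Relation.ReflTransGen (fun a b => a ∈ S ∧ b ∈ S ∧ G.Adj a b) i j

/-- The communication game `v^G`: `v^G(S)` is the sum of `v` over the (vertex sets of the)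
connected components of the subgraph of `G` induced by `S`. -/
def commGame [Fintype α] [DecidableEq α] (G : SimpleGraph α)
    (v : Finset α → ℝ) (S : Finset α) : ℝ :=
  ∑ A ∈ S.image (compOf G S), v A

/-- `G` preserves `(ω,Σ)`-convexity. -/
def Preserves [Fintype α] [DecidableEq α] (G : SimpleGraph α)
    (ω : α → ℝ) (p : α → ℕ) : Prop :=
  ∀ v : Finset α → ℝ, v ∅ = 0 → WConvex ω p v → WConvex ω p (commGame G v)

/-- The set of players of priority `k`. -/
def level [Fintype α] (p : α → ℕ) (k : ℕ) : Finset α :=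
  Finset.univ.filter fun i => p i = k

/-- The vertex set `C` induces a complete subgraph of `G`. -/
def IsCompleteOn (G : SimpleGraph α) (C : Finset α) : Prop :=
  ∀ x ∈ C, ∀ y ∈ C, x ≠ y → G.Adj x y

/-- The subgraph of `G` induced by `C` is a star with center `c`: within `C`, `c` is adjacent
to all other vertices and there are no other edges. -/
def IsStarOnCenter (G : SimpleGraph α) (C : Finset α) (c : α) : Prop :=
  ∀ x ∈ C, ∀ y ∈ C, (G.Adj x y ↔ x ≠ y ∧ (x = c ∨ y = c))

/-- The subgraph of `G` induced by `C` is a star. -/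
def IsStarOn (G : SimpleGraph α) (C : Finset α) : Prop :=
  ∃ c ∈ C, IsStarOnCenter G C c

/-- `A` and `B` are linked: some edge of `G` joins a vertex of `A` to a vertex of `B`. -/
def Linked (G : SimpleGraph α) (A B : Finset α) : Prop :=
  ∃ a ∈ A, ∃ b ∈ B, G.Adj a b

-- ### Auxiliary machinery for the proof ###

abbrev rel' [Fintype α] (G : SimpleGraph α) (S : Finset α) : α → α → Prop :=
  fun a b => a ∈ S ∧ b ∈ S ∧ G.Adj a b

lemma rtg_closed {r : α → α → Prop} {P : α → Prop} (h : ∀ x y, P x → r x y → P y)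
    {x y : α} (hx : P x) (hxy : Relation.ReflTransGen r x y) : P y := by
  induction hxy with
  | refl => exact hx
  | tail _ h2 ih => exact h _ _ ih h2

lemma rel'_symm [Fintype α] (G : SimpleGraph α) (S : Finset α) : Symmetric (rel' G S) :=
  fun _ _ h => ⟨h.2.1, h.1, h.2.2.symm⟩

lemma mem_compOf [Fintype α] [DecidableEq α] {G : SimpleGraph α} {S : Finset α} {i j : α} :
    j ∈ compOf G S i ↔ j ∈ S ∧ Relation.ReflTransGen (rel' G S) i j := by
  simp [compOf, Finset.mem_filter, rel']

lemma compOf_eq_of [Fintype α] [DecidableEq α] {G : SimpleGraph α} {S : Finset α} {j : α}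
    (hall : ∀ m ∈ S, Relation.ReflTransGen (rel' G S) j m) : compOf G S j = S := by
  ext m
  rw [mem_compOf]
  exact ⟨fun h => h.1, fun h => ⟨h, hall m h⟩⟩

lemma commGame_of_connected [Fintype α] [DecidableEq α] {G : SimpleGraph α} {S : Finset α}
    (v : Finset α → ℝ) (hne : S.Nonempty)
    (hall : ∀ j ∈ S, ∀ m ∈ S, Relation.ReflTransGen (rel' G S) j m) :
    commGame G v S = v S := by
  have himg : S.image (compOf G S) = {S} := by
    ext A
    simp only [Finset.mem_image, Finset.mem_singleton]
    constructor
    · rintro ⟨j, hj, rfl⟩; exact compOf_eq_of (hall j hj)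
    · rintro rfl
      obtain ⟨j, hj⟩ := hne
      exact ⟨j, hj, compOf_eq_of (hall j hj)⟩
  rw [commGame, himg, Finset.sum_singleton]

lemma commGame_eq_zero [Fintype α] [DecidableEq α] {G : SimpleGraph α} {S : Finset α}
    {v : Finset α → ℝ} (h : ∀ A, A ⊆ S → v A = 0) : commGame G v S = 0 := by
  apply Finset.sum_eq_zero
  intro A hA
  rw [Finset.mem_image] at hA
  obtain ⟨j, _, rfl⟩ := hA
  exact h _ (Finset.filter_subset _ _)

lemma commGame_pair [Fintype α] [DecidableEq α] {G : SimpleGraph α} {s t : α}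
    (v : Finset α → ℝ) (hne : s ≠ t) (hAdj : ¬ G.Adj s t) :
    commGame G v {s, t} = v {s} + v {t} := by
  have key : ∀ x y : α, x ≠ y → ¬ G.Adj x y →
      compOf G {x,y} x = {x} := by
    intro x y hxy hA
    ext m
    rw [mem_compOf]
    constructor
    · rintro ⟨hm, hr⟩
      have : m = x := by
        refine rtg_closed (P := fun z => z = x) ?_ rfl hr
        rintro u w rfl ⟨_, hw, hadj⟩
        rcases Finset.mem_insert.1 hw with rfl | hw
        · exact absurd hadj (G.irrefl)
        · rw [Finset.mem_singleton] at hw; subst hw; exact absurd hadj hA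
      simp [this]
    · intro hm
      rw [Finset.mem_singleton] at hm; subst hm
      exact ⟨by simp, Relation.ReflTransGen.refl⟩
  have hcs : compOf G {s,t} s = {s} := key s t hne hAdj
  have hswap : ({s,t} : Finset α) = {t,s} := Finset.pair_comm s t
  have hct : compOf G {s,t} t = {t} := by
    rw [hswap]
    exact key t s hne.symm (fun h => hAdj h.symm)
  have himg : ({s,t} : Finset α).image (compOf G {s,t}) = {{s},{t}} := by
    rw [show ({s,t} : Finset α) = insert s {t} from rfl, Finset.image_insert,
      Finset.image_singleton, hcs, hct]
  rw [commGame, himg, Finset.sum_insert (by simp [hne]), Finset.sum_singleton]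

lemma commGame_triple [Fintype α] [DecidableEq α] {G : SimpleGraph α} {a c d : α}
    (v : Finset α → ℝ) (hac_ne : a ≠ c) (hcd_ne : c ≠ d)
    (had : G.Adj a d) (hac : ¬ G.Adj a c) (hcd : ¬ G.Adj c d) :
    commGame G v {a, c, d} = v {a, d} + v {c} := by
  have had_ne : a ≠ d := had.ne
  have maS : a ∈ ({a,c,d} : Finset α) := by simp
  have mcS : c ∈ ({a,c,d} : Finset α) := by simp
  have mdS : d ∈ ({a,c,d} : Finset α) := by simp
  have inv : ∀ {x y : α}, (x = a ∨ x = d) → rel' G {a,c,d} x y → (y = a ∨ y = d) := by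
    rintro x y hx ⟨_, hy, hadj⟩
    rcases Finset.mem_insert.1 hy with rfl | hy
    · exact Or.inl rfl
    rcases Finset.mem_insert.1 hy with rfl | hy
    · exfalso
      rcases hx with rfl | rfl
      · exact hac hadj
      · exact hcd hadj.symm
    · rw [Finset.mem_singleton] at hy; subst hy; exact Or.inr rfl
  have compa : ∀ x : α, (x = a ∨ x = d) → compOf G {a,c,d} x = {a, d} := by
    intro x hx
    ext m
    rw [mem_compOf]
    constructor
    · rintro ⟨_, hr⟩
      have := rtg_closed (P := fun z => z = a ∨ z = d) (fun u w hu hr => inv hu hr) hx hr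
      simp only [Finset.mem_insert, Finset.mem_singleton]; tauto
    · intro hm
      rcases Finset.mem_insert.1 hm with rfl | hm
      · rcases hx with rfl | rfl
        · exact ⟨maS, Relation.ReflTransGen.refl⟩
        · exact ⟨maS, Relation.ReflTransGen.single ⟨mdS, maS, had.symm⟩⟩
      · rw [Finset.mem_singleton] at hm; subst hm
        rcases hx with rfl | rfl
        · exact ⟨mdS, Relation.ReflTransGen.single ⟨maS, mdS, had⟩⟩
        · exact ⟨mdS, Relation.ReflTransGen.refl⟩
  have compc : compOf G {a,c,d} c = {c} := by
    ext m
    rw [mem_compOf]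
    constructor
    · rintro ⟨_, hr⟩
      have : m = c := by
        refine rtg_closed (P := fun z => z = c) ?_ rfl hr
        rintro u w rfl ⟨_, hw, hadj⟩
        rcases Finset.mem_insert.1 hw with rfl | hw
        · exact absurd hadj.symm hac
        rcases Finset.mem_insert.1 hw with rfl | hw
        · exact absurd hadj (G.irrefl)
        · rw [Finset.mem_singleton] at hw; subst hw; exact absurd hadj hcd
      simp [this]
    · intro hm
      rw [Finset.mem_singleton] at hm; subst hm
      exact ⟨mcS, Relation.ReflTransGen.refl⟩
  have himg : ({a,c,d} : Finset α).image (compOf G {a,c,d}) = {{a,d},{c}} := by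
    rw [show ({a,c,d} : Finset α) = insert a (insert c {d}) from rfl]
    rw [Finset.image_insert, Finset.image_insert, Finset.image_singleton,
      compa a (Or.inl rfl), compa d (Or.inr rfl), compc]
    ext A; simp only [Finset.mem_insert, Finset.mem_singleton]; tauto
  have hne2 : ({a,d} : Finset α) ≠ {c} := by
    intro h
    have : a ∈ ({c} : Finset α) := h ▸ (by simp : a ∈ ({a,d} : Finset α))
    rw [Finset.mem_singleton] at this
    exact hac_ne this
  rw [commGame, himg, Finset.sum_insert (by simpa using hne2), Finset.sum_singleton]

def game [DecidableEq α] (ω : α → ℝ) (a c d : α) (X : Finset α) : ℝ :=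
  (if a ∈ X ∧ c ∈ X then ω a + ω d else 0) +
    ((if a ∈ X ∧ d ∈ X then ω a + ω c else 0) -
      (if (a ∈ X ∧ c ∈ X) ∧ d ∈ X then ω a else 0))

lemma game_empty [DecidableEq α] (ω : α → ℝ) (a c d : α) : game ω a c d ∅ = 0 := by
  simp [game]

lemma game_wconvex [DecidableEq α] (ω : α → ℝ) (hω : ∀ i, 0 < ω i) (p : α → ℕ)
    {a c d : α} (hac_ne : a ≠ c) (had_ne : a ≠ d) (hcd_ne : c ≠ d)
    (hpc : p c = p a) (hpd : p d = p a) :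
    WConvex ω p (game ω a c d) := by
  intro S T hST
  have hsub := hST.subset
  set v := game ω a c d with hvdef
  have hvE : ∀ (X : Finset α) (i : α), i ≠ a → i ≠ c → i ≠ d → v (X.erase i) = v X := by
    intro X i h1 h2 h3
    simp [hvdef, game, Finset.mem_erase, Ne.symm h1, Ne.symm h2, Ne.symm h3]
  have hzero : ∀ i ∈ S, i ∉ ({a,c,d} : Finset α) →
      wbar ω p T i * (v T - v (T.erase i) - v S + v (S.erase i)) = 0 := by
    intro i _ hiQ
    simp only [Finset.mem_insert, Finset.mem_singleton, not_or] at hiQ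
    rw [hvE T i hiQ.1 hiQ.2.1 hiQ.2.2, hvE S i hiQ.1 hiQ.2.1 hiQ.2.2]
    ring
  rw [← Finset.sum_subset (Finset.inter_subset_left : S ∩ {a,c,d} ⊆ S)
    (fun x hx hnx => hzero x hx (fun h => hnx (Finset.mem_inter.2 ⟨hx, h⟩)))]
  rw [Finset.inter_comm, ← Finset.filter_mem_eq_inter, Finset.sum_filter]
  rw [Finset.sum_insert (show a ∉ ({c,d} : Finset α) by simp [hac_ne, had_ne]),
    Finset.sum_insert (by simp [hcd_ne]), Finset.sum_singleton]
  by_cases hsup : T.sup p = p a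
  · by_cases haT : a ∈ T
    · have hErase : ∀ (X : Finset α), (a ∈ X.erase a ↔ False) ∧ (a ∈ X.erase c ↔ a ∈ X)
          ∧ (a ∈ X.erase d ↔ a ∈ X) := by
        intro X
        simp [Finset.mem_erase, hac_ne, had_ne]
      by_cases hcT : c ∈ T <;> by_cases hdT : d ∈ T <;>
        by_cases haS : a ∈ S <;> by_cases hcS : c ∈ S <;> by_cases hdS : d ∈ S <;>
        first
          | exact absurd (hsub haS) haT
          | exact absurd (hsub hcS) hcT
          | exact absurd (hsub hdS) hdT
          | (simp [hvdef, game, wbar, hsup, hpc, hpd, Finset.mem_erase, haT, hcT, hdT,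
              haS, hcS, hdS, hac_ne, had_ne, hcd_ne,
              Ne.symm hac_ne, Ne.symm had_ne, Ne.symm hcd_ne] <;>
            nlinarith [mul_pos (hω a) (hω c), mul_pos (hω a) (hω d),
              mul_pos (hω c) (hω d), (hω a).le, (hω c).le, (hω d).le])
    · have haS : a ∉ S := fun h => haT (hsub h)
      simp [hvdef, game, haT, haS, Finset.mem_erase]
  · have w0 : ∀ i : α, p i = p a → wbar ω p T i = 0 := by
      intro i h
      rw [wbar, if_neg]
      rintro ⟨_, h2⟩
      exact hsup (h2.symm.trans h)
    simp [w0 a rfl, w0 c hpc, w0 d hpd]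

set_option maxHeartbeats 1000000 in
lemma fourPoint [Fintype α] [DecidableEq α] (ω : α → ℝ) (hω : ∀ i, 0 < ω i) (p : α → ℕ)
    (G : SimpleGraph α) (hpres : Preserves G ω p) {a b c d : α}
    (hac_ne : a ≠ c) (hbd_ne : b ≠ d) (hcd_ne : c ≠ d)
    (hpb : p b = p a) (hpc : p c = p a) (hpd : p d = p a)
    (hab : G.Adj a b) (hbc : G.Adj b c) (had : G.Adj a d) (hac : ¬ G.Adj a c) : False := by
  have hab_ne : a ≠ b := hab.ne
  have hbc_ne : b ≠ c := hbc.ne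
  have had_ne : a ≠ d := had.ne
  set v := game ω a c d with hvdef
  have hw := hpres v (game_empty ω a c d)
    (game_wconvex ω hω p hac_ne had_ne hcd_ne hpc hpd)
  have maT : a ∈ ({a,b,c,d} : Finset α) := by simp
  have mbT : b ∈ ({a,b,c,d} : Finset α) := by simp
  have mcT : c ∈ ({a,b,c,d} : Finset α) := by simp
  have mdT : d ∈ ({a,b,c,d} : Finset α) := by simp
  have hsub : ({a,b,c} : Finset α) ⊂ ({a,b,c,d} : Finset α) := by
    rw [Finset.ssubset_def]
    constructor
    · intro x hx
      simp only [Finset.mem_insert, Finset.mem_singleton] at hx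
      simp only [Finset.mem_insert, Finset.mem_singleton]
      tauto
    · intro hTS
      have := hTS mdT
      simp only [Finset.mem_insert, Finset.mem_singleton] at this
      rcases this with rfl|rfl|rfl
      · exact had_ne rfl
      · exact hbd_ne rfl
      · exact hcd_ne rfl
  have hsupT : ({a,b,c,d} : Finset α).sup p = p a := by simp [hpb, hpc, hpd]
  -- game values
  have nes : (a ≠ b) ∧ (a ≠ c) ∧ (a ≠ d) ∧ (b ≠ a) ∧ (c ≠ a) ∧ (d ≠ a)
      ∧ (b ≠ c) ∧ (c ≠ b) ∧ (b ≠ d) ∧ (d ≠ b) ∧ (c ≠ d) ∧ (d ≠ c) :=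
    ⟨hab_ne, hac_ne, had_ne, hab_ne.symm, hac_ne.symm, had_ne.symm,
      hbc_ne, hbc_ne.symm, hbd_ne, hbd_ne.symm, hcd_ne, hcd_ne.symm⟩
  obtain ⟨n1,n2,n3,n4,n5,n6,n7,n8,n9,n10,n11,n12⟩ := nes
  have vT : v ({a,b,c,d} : Finset α) = ω a + ω c + ω d := by simp [hvdef, game] <;> ring
  have vS : v ({a,b,c} : Finset α) = ω a + ω d := by simp [hvdef, game, n1, n2, n3, n4, n5, n6, n7, n8, n9, n10, n11, n12] <;> ring
  have vABD : v ({a,b,d} : Finset α) = ω a + ω c := by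
    simp [hvdef, game, n1, n2, n3, n4, n5, n6, n7, n8, n9, n10, n11, n12] <;> ring
  have vAD : v ({a,d} : Finset α) = ω a + ω c := by
    simp [hvdef, game, n1, n2, n3, n4, n5, n6, n7, n8, n9, n10, n11, n12] <;> ring
  have vACD : v ({a,c,d} : Finset α) = ω a + ω c + ω d := by
    simp [hvdef, game, n1, n2, n3, n4, n5, n6, n7, n8, n9, n10, n11, n12] <;> ring
  have vA : v ({a} : Finset α) = 0 := by simp [hvdef, game, n1, n2, n3, n4, n5, n6, n7, n8, n9, n10, n11, n12]
  have vC : v ({c} : Finset α) = 0 := by simp [hvdef, game, n1, n2, n3, n4, n5, n6, n7, n8, n9, n10, n11, n12]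
  -- zero commGames
  have hzA : ∀ (X : Finset α), a ∉ X → v X = 0 := by
    intro X hX; simp [hvdef, game, hX]
  have wBCD : commGame G v ({b,c,d} : Finset α) = 0 := by
    apply commGame_eq_zero
    intro A hA
    refine hzA A fun h => ?_
    have := hA h
    simp only [Finset.mem_insert, Finset.mem_singleton] at this
    tauto
  have wBC : commGame G v ({b,c} : Finset α) = 0 := by
    apply commGame_eq_zero
    intro A hA
    refine hzA A fun h => ?_
    have := hA h
    simp only [Finset.mem_insert, Finset.mem_singleton] at this
    tauto
  have wAB : commGame G v ({a,b} : Finset α) = 0 := by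
    apply commGame_eq_zero
    intro A hA
    have hcA : c ∉ A := fun h => by
      have := hA h
      simp only [Finset.mem_insert, Finset.mem_singleton] at this
      tauto
    have hdA : d ∉ A := fun h => by
      have := hA h
      simp only [Finset.mem_insert, Finset.mem_singleton] at this
      tauto
    simp [hvdef, game, hcA, hdA]
  have wAC : commGame G v ({a,c} : Finset α) = 0 := by
    rw [commGame_pair v hac_ne hac, vA, vC]; ring
  -- connected commGames
  have wT : commGame G v ({a,b,c,d} : Finset α) = ω a + ω c + ω d := by
    rw [commGame_of_connected v ⟨a, maT⟩ ?_, vT]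
    have hub : ∀ m ∈ ({a,b,c,d} : Finset α), Relation.ReflTransGen (rel' G ({a,b,c,d} : Finset α)) a m := by
      intro m hm
      simp only [Finset.mem_insert, Finset.mem_singleton] at hm
      rcases hm with rfl|rfl|rfl|rfl
      · exact Relation.ReflTransGen.refl
      · exact Relation.ReflTransGen.single ⟨maT, mbT, hab⟩
      · exact Relation.ReflTransGen.head ⟨maT, mbT, hab⟩
          (Relation.ReflTransGen.single ⟨mbT, mcT, hbc⟩)
      · exact Relation.ReflTransGen.single ⟨maT, mdT, had⟩
    exact fun j hj m hm =>
      ((@Relation.ReflTransGen.stdSymm _ _ ⟨fun _ _ hr => rel'_symm G ({a,b,c,d} : Finset α) hr⟩).symm _ _ (hub j hj)).trans (hub m hm)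
  have wS : commGame G v ({a,b,c} : Finset α) = ω a + ω d := by
    rw [commGame_of_connected v ⟨a, by simp⟩ ?_, vS]
    have maS : a ∈ ({a,b,c} : Finset α) := by simp
    have mbS : b ∈ ({a,b,c} : Finset α) := by simp
    have mcS : c ∈ ({a,b,c} : Finset α) := by simp
    have hub : ∀ m ∈ ({a,b,c} : Finset α), Relation.ReflTransGen (rel' G ({a,b,c} : Finset α)) a m := by
      intro m hm
      simp only [Finset.mem_insert, Finset.mem_singleton] at hm
      rcases hm with rfl|rfl|rfl
      · exact Relation.ReflTransGen.refl
      · exact Relation.ReflTransGen.single ⟨maS, mbS, hab⟩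
      · exact Relation.ReflTransGen.head ⟨maS, mbS, hab⟩
          (Relation.ReflTransGen.single ⟨mbS, mcS, hbc⟩)
    exact fun j hj m hm =>
      ((@Relation.ReflTransGen.stdSymm _ _ ⟨fun _ _ hr => rel'_symm G ({a,b,c} : Finset α) hr⟩).symm _ _ (hub j hj)).trans (hub m hm)
  have wABD : commGame G v ({a,b,d} : Finset α) = ω a + ω c := by
    set U : Finset α := {a,b,d} with hU
    have maU : a ∈ U := by simp [hU]
    have mbU : b ∈ U := by simp [hU]
    have mdU : d ∈ U := by simp [hU]
    rw [commGame_of_connected v ⟨a, maU⟩ ?_, vABD]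
    have hub : ∀ m ∈ U, Relation.ReflTransGen (rel' G U) a m := by
      intro m hm
      simp only [hU, Finset.mem_insert, Finset.mem_singleton] at hm
      rcases hm with rfl|rfl|rfl
      · exact Relation.ReflTransGen.refl
      · exact Relation.ReflTransGen.single ⟨maU, mbU, hab⟩
      · exact Relation.ReflTransGen.single ⟨maU, mdU, had⟩
    exact fun j hj m hm =>
      ((@Relation.ReflTransGen.stdSymm _ _ ⟨fun _ _ hr => rel'_symm G U hr⟩).symm _ _ (hub j hj)).trans (hub m hm)
  -- erase computations
  have eTa : ({a,b,c,d} : Finset α).erase a = ({b,c,d} : Finset α) := by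
    ext x
    simp only [Finset.mem_erase, Finset.mem_insert, Finset.mem_singleton]
    constructor
    · rintro ⟨hxa, rfl|h⟩
      · exact absurd rfl hxa
      · exact h
    · rintro (rfl|rfl|rfl)
      · exact ⟨n4, Or.inr (Or.inl rfl)⟩
      · exact ⟨n5, Or.inr (Or.inr (Or.inl rfl))⟩
      · exact ⟨n6, Or.inr (Or.inr (Or.inr rfl))⟩
  have eTb : ({a,b,c,d} : Finset α).erase b = ({a,c,d} : Finset α) := by
    ext x
    simp only [Finset.mem_erase, Finset.mem_insert, Finset.mem_singleton]
    constructor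
    · rintro ⟨hxb, rfl|rfl|h⟩
      · exact Or.inl rfl
      · exact absurd rfl hxb
      · exact Or.inr h
    · rintro (rfl|rfl|rfl)
      · exact ⟨n1, Or.inl rfl⟩
      · exact ⟨n8, Or.inr (Or.inr (Or.inl rfl))⟩
      · exact ⟨n10, Or.inr (Or.inr (Or.inr rfl))⟩
  have eTc : ({a,b,c,d} : Finset α).erase c = ({a,b,d} : Finset α) := by
    ext x
    simp only [Finset.mem_erase, Finset.mem_insert, Finset.mem_singleton]
    constructor
    · rintro ⟨hxc, rfl|rfl|rfl|rfl⟩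
      · exact Or.inl rfl
      · exact Or.inr (Or.inl rfl)
      · exact absurd rfl hxc
      · exact Or.inr (Or.inr rfl)
    · rintro (rfl|rfl|rfl)
      · exact ⟨n2, Or.inl rfl⟩
      · exact ⟨n7, Or.inr (Or.inl rfl)⟩
      · exact ⟨n12, Or.inr (Or.inr (Or.inr rfl))⟩
  have eSa : ({a,b,c} : Finset α).erase a = ({b,c} : Finset α) := by
    ext x
    simp only [Finset.mem_erase, Finset.mem_insert, Finset.mem_singleton]
    constructor
    · rintro ⟨hxa, rfl|h⟩
      · exact absurd rfl hxa
      · exact h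
    · rintro (rfl|rfl)
      · exact ⟨n4, Or.inr (Or.inl rfl)⟩
      · exact ⟨n5, Or.inr (Or.inr rfl)⟩
  have eSb : ({a,b,c} : Finset α).erase b = ({a,c} : Finset α) := by
    ext x
    simp only [Finset.mem_erase, Finset.mem_insert, Finset.mem_singleton]
    constructor
    · rintro ⟨hxb, rfl|rfl|rfl⟩
      · exact Or.inl rfl
      · exact absurd rfl hxb
      · exact Or.inr rfl
    · rintro (rfl|rfl)
      · exact ⟨n1, Or.inl rfl⟩
      · exact ⟨n8, Or.inr (Or.inr rfl)⟩
  have eSc : ({a,b,c} : Finset α).erase c = ({a,b} : Finset α) := by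
    ext x
    simp only [Finset.mem_erase, Finset.mem_insert, Finset.mem_singleton]
    constructor
    · rintro ⟨hxc, rfl|rfl|rfl⟩
      · exact Or.inl rfl
      · exact Or.inr rfl
      · exact absurd rfl hxc
    · rintro (rfl|rfl)
      · exact ⟨n2, Or.inl rfl⟩
      · exact ⟨n7, Or.inr (Or.inl rfl)⟩
  -- wbar values
  have wba : wbar ω p ({a,b,c,d} : Finset α) a = ω a := by rw [wbar, if_pos ⟨maT, by rw [hsupT]⟩]
  have wbb : wbar ω p ({a,b,c,d} : Finset α) b = ω b := by rw [wbar, if_pos ⟨mbT, by rw [hsupT, hpb]⟩]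
  have wbc' : wbar ω p ({a,b,c,d} : Finset α) c = ω c := by rw [wbar, if_pos ⟨mcT, by rw [hsupT, hpc]⟩]
  -- the violated inequality
  have h0 := hw ({a,b,c} : Finset α) ({a,b,c,d} : Finset α) hsub
  rw [Finset.sum_insert (by simp [n1, n2]), Finset.sum_insert (by simp [n7]),
    Finset.sum_singleton] at h0
  rw [wba, wbb, wbc', eTa, eTb, eTc, eSa, eSb, eSc, wT, wS, wBCD, wABD, wBC, wAC, wAB] at h0
  by_cases hcd : G.Adj c d
  · have wACD : commGame G v ({a,c,d} : Finset α) = ω a + ω c + ω d := by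
      set U : Finset α := {a,c,d} with hU
      have maU : a ∈ U := by simp [hU]
      have mcU : c ∈ U := by simp [hU]
      have mdU : d ∈ U := by simp [hU]
      rw [commGame_of_connected v ⟨a, maU⟩ ?_, vACD]
      have hub : ∀ m ∈ U, Relation.ReflTransGen (rel' G U) a m := by
        intro m hm
        simp only [hU, Finset.mem_insert, Finset.mem_singleton] at hm
        rcases hm with rfl|rfl|rfl
        · exact Relation.ReflTransGen.refl
        · exact Relation.ReflTransGen.head ⟨maU, mdU, had⟩
            (Relation.ReflTransGen.single ⟨mdU, mcU, hcd.symm⟩)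
        · exact Relation.ReflTransGen.single ⟨maU, mdU, had⟩
      exact fun j hj m hm =>
        ((@Relation.ReflTransGen.stdSymm _ _ ⟨fun _ _ hr => rel'_symm G U hr⟩).symm _ _ (hub j hj)).trans (hub m hm)
    rw [wACD] at h0
    nlinarith [mul_pos (hω b) (hω a), mul_pos (hω b) (hω d), mul_pos (hω a) (hω c)]
  · have wACD : commGame G v ({a,c,d} : Finset α) = ω a + ω c := by
      rw [commGame_triple v hac_ne hcd_ne had hac hcd, vAD, vC]; ring
    rw [wACD] at h0
    nlinarith [mul_pos (hω b) (hω a), mul_pos (hω b) (hω d), mul_pos (hω a) (hω c)]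

lemma exists_P3 [Fintype α] [DecidableEq α] {G : SimpleGraph α} {L : Finset α} {x y : α}
    (hxy : Relation.ReflTransGen (rel' G L) x y) (hne : x ≠ y) (hnadj : ¬ G.Adj x y) :
    ∃ u v w : α, Relation.ReflTransGen (rel' G L) x u ∧ rel' G L u v ∧ rel' G L v w ∧
      ¬ G.Adj u w ∧ u ≠ w := by
  have main : ∀ x' : α, Relation.ReflTransGen (rel' G L) x' y → x' ≠ y → ¬ G.Adj x' y →
      ∃ u v w : α, Relation.ReflTransGen (rel' G L) x' u ∧ rel' G L u v ∧ rel' G L v w ∧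
        ¬ G.Adj u w ∧ u ≠ w := by
    intro x' hx'y
    induction hx'y using Relation.ReflTransGen.head_induction_on with
    | refl => intro h _; exact absurd rfl h
    | @head z m hstep htail ih =>
      intro hne' hnadj'
      by_cases hmy : m = y
      · subst hmy; exact absurd hstep.2.2 hnadj'
      · by_cases hAdj : G.Adj m y
        · have hyL : y ∈ L := by
            have := rtg_closed (r := rel' G L) (P := fun z' => z' = m ∨ z' ∈ L)
              (fun u w hu hr => Or.inr hr.2.1) (Or.inl rfl) htail
            rcases this with h | h
            · exact absurd h.symm hmy
            · exact h
          exact ⟨z, m, y, Relation.ReflTransGen.refl, hstep, ⟨hstep.2.1, hyL, hAdj⟩,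
            hnadj', hne'⟩
        · obtain ⟨u, v, w, hr, h1, h2, h3, h4⟩ := ih hmy hAdj
          exact ⟨u, v, w, Relation.ReflTransGen.head hstep hr, h1, h2, h3, h4⟩
  exact main x hxy hne hnadj


/-- If `G` preserves `(ω,Σ)`-convexity then, for every priority level `k`, every connected
component of the subgraph `G_k` induced by the players of priority `k` is a complete graph
or a star. -/
theorem level_components_complete_or_star [Fintype α] [DecidableEq α]
    (ω : α → ℝ) (hω : ∀ i, 0 < ω i) (p : α → ℕ) (hp : ∀ i, 1 ≤ p i)
    (G : SimpleGraph α) (hpres : Preserves G ω p)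
    (k : ℕ) (i : α) (hi : p i = k) :
    IsCompleteOn G (compOf G (level p k) i) ∨ IsStarOn G (compOf G (level p k) i) := by
  set L := level p k with hL
  have hLmem : ∀ j, j ∈ L ↔ p j = k := by intro j; simp [hL, level]
  by_cases hcomp : ∀ x ∈ compOf G L i, ∀ y ∈ compOf G L i, x ≠ y → G.Adj x y
  · exact Or.inl hcomp
  · right
    push_neg at hcomp
    obtain ⟨x, hx, y, hy, hxy_ne, hxy_nadj⟩ := hcomp
    rw [mem_compOf] at hx hy
    have hsymmL : ∀ {s t : α}, Relation.ReflTransGen (rel' G L) s t →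
        Relation.ReflTransGen (rel' G L) t s :=
      fun h => (@Relation.ReflTransGen.stdSymm _ _ ⟨fun _ _ hr => rel'_symm G L hr⟩).symm _ _ h
    have hxy : Relation.ReflTransGen (rel' G L) x y := (hsymmL hx.2).trans hy.2
    obtain ⟨u, v, w, hxu, huv, hvw, huw, huw_ne⟩ := exists_P3 hxy hxy_ne hxy_nadj
    have hUL : u ∈ L := huv.1
    have hVL : v ∈ L := huv.2.1
    have hWL : w ∈ L := hvw.2.1
    have hAuv : G.Adj u v := huv.2.2
    have hAvw : G.Adj v w := hvw.2.2
    have hpL : ∀ j, j ∈ L → p j = p u := by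
      intro j hj; rw [(hLmem j).1 hj, (hLmem u).1 hUL]
    have H1 : ∀ s, s ∈ L → G.Adj v s → ∀ t, t ∈ L → G.Adj s t → t = v := by
      intro s hsL hvs t htL hst
      by_contra hts
      by_cases hsu : s = u
      · subst hsu
        have htw : t ≠ w := by rintro rfl; exact huw hst
        exact fourPoint ω hω p G hpres huw_ne (fun h => hts h.symm) (Ne.symm htw)
          (hpL v hVL) (hpL w hWL) (hpL t htL) hAuv hAvw hst huw
      · by_cases hsw : s = w
        · subst hsw
          have htu : t ≠ u := by rintro rfl; exact huw hst.symm
          exact fourPoint ω hω p G hpres (Ne.symm huw_ne) (fun h => hts h.symm)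
            (Ne.symm htu) ((hpL v hVL).trans (hpL s hsL).symm)
            ((hpL u hUL).trans (hpL s hsL).symm) ((hpL t htL).trans (hpL s hsL).symm)
            hAvw.symm hAuv.symm hst (fun h => huw h.symm)
        · have hnsu : ¬ G.Adj s u := by
            intro h
            exact fourPoint ω hω p G hpres huw_ne hvs.ne (Ne.symm hsw)
              (hpL v hVL) (hpL w hWL) (hpL s hsL) hAuv hAvw h.symm huw
          have htu : t ≠ u := by rintro rfl; exact hnsu hst
          exact fourPoint ω hω p G hpres hsu (fun h => hts h.symm) (Ne.symm htu)
            ((hpL v hVL).trans (hpL s hsL).symm) ((hpL u hUL).trans (hpL s hsL).symm)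
            ((hpL t htL).trans (hpL s hsL).symm) hvs.symm hAuv.symm hst hnsu
    have H2 : ∀ t, Relation.ReflTransGen (rel' G L) v t → t = v ∨ G.Adj v t := by
      intro t ht
      induction ht with
      | refl => exact Or.inl rfl
      | @tail t' t'' hpath hstep ih =>
        rcases ih with rfl | hAdj'
        · exact Or.inr hstep.2.2
        · exact Or.inl (H1 t' hstep.1 hAdj' t'' hstep.2.1 hstep.2.2)
    have hiv : Relation.ReflTransGen (rel' G L) i v :=
      (hx.2.trans hxu).trans (Relation.ReflTransGen.single huv)
    have hvC : v ∈ compOf G L i := by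
      rw [mem_compOf]; exact ⟨hVL, hiv⟩
    have hAdjC : ∀ z, z ∈ L → Relation.ReflTransGen (rel' G L) i z → z ≠ v → G.Adj v z := by
      intro z hzL hz hzv
      rcases H2 z ((hsymmL hiv).trans hz) with h | h
      · exact absurd h hzv
      · exact h
    refine ⟨v, hvC, ?_⟩
    intro s hs t ht
    rw [mem_compOf] at hs ht
    constructor
    · intro hAdj
      refine ⟨hAdj.ne, ?_⟩
      by_contra hboth
      push_neg at hboth
      obtain ⟨hsv, htv⟩ := hboth
      exact htv (H1 s hs.1 (hAdjC s hs.1 hs.2 hsv) t ht.1 hAdj)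
    · rintro ⟨hst_ne, rfl | rfl⟩
      · exact hAdjC t ht.1 ht.2 (Ne.symm hst_ne)
      · exact (hAdjC s hs.1 hs.2 hst_ne).symm

end
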